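/- Every connected component of the poset of set compositions of [n] under the order ≤_* is a boolean lattice: specifically, the set of elements ≥_* a minimal element Π (a set composition all of whose parts are singletons, i.e. a permutation) is isomorphic to the boolean lattice on the set {i : Π_i < Π_{i+1}}. -/

import Mathlib

open scoped Classical
noncomputable section

/-- The ground set `[n] = {1, …, n}`. -/
def ground (n : ℕ) : Finset ℕ := Finset.Icc 1 n

/-- `A` is a set partition of `[n]`. -/
def IsSetPartition (n : ℕ) (A : Finset (Finset ℕ)) : Prop :=
  (∀ B ∈ A, B.Nonempty) ∧
  (∀ B ∈ A, ∀ C ∈ A, B ≠ C → Disjoint B C) ∧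
  A.sup id = ground n

/-- Shift every entry of every part by `n`. -/
def shiftP (n : ℕ) (A : Finset (Finset ℕ)) : Finset (Finset ℕ) :=
  A.image (fun B => B.image (· + n))

/-- Shifted concatenation `A|B` of a set partition `A ⊢ [n]` with `B`. -/
def concatP (n : ℕ) (A B : Finset (Finset ℕ)) : Finset (Finset ℕ) :=
  A ∪ shiftP n B

/-- `A` is an atomic set partition of `[n]`: nonempty and not a nontrivial
shifted concatenation. -/
def AtomicP (n : ℕ) (A : Finset (Finset ℕ)) : Prop :=
  IsSetPartition n A ∧ 0 < n ∧
  ¬ ∃ k B C, 0 < k ∧ k < n ∧ IsSetPartition k B ∧ IsSetPartition (n - k) C ∧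
      A = concatP k B C

/-- Shifted concatenation of a list of (size, set partition) pairs. -/
def concatListP : List (ℕ × Finset (Finset ℕ)) → ℕ × Finset (Finset ℕ)
  | [] => (0, ∅)
  | p :: L => ((concatListP L).1 + p.1, concatP p.1 p.2 (concatListP L).2)

/-- `L` is the atomic factorization `A^!` of the set partition `A ⊢ [n]`. -/
def AtomicFactorization (n : ℕ) (A : Finset (Finset ℕ))
    (L : List (ℕ × Finset (Finset ℕ))) : Prop :=
  (∀ p ∈ L, AtomicP p.1 p.2) ∧ concatListP L = (n, A)

/-- The Bell number: the number of set partitions of `[n]`. -/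
def bell (n : ℕ) : ℕ := Nat.card {A : Finset (Finset ℕ) // IsSetPartition n A}

/-- Stirling numbers of the second kind: set partitions of `[n]` into `k` parts. -/
def stirling2 (n k : ℕ) : ℕ :=
  Nat.card {A : Finset (Finset ℕ) // IsSetPartition n A ∧ A.card = k}

/-- The number of atomic set partitions of `[n]` into `k` parts. -/
def atomCount (n k : ℕ) : ℕ :=
  Nat.card {A : Finset (Finset ℕ) // AtomicP n A ∧ A.card = k}

/-- The number of atomic set partitions of `[n]`. -/
def atomCount' (n : ℕ) : ℕ := Nat.card {A : Finset (Finset ℕ) // AtomicP n A}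

/-- Refinement order: `A ≤ B` iff every part of `A` is contained in a part of `B`. -/
def refines (A B : Finset (Finset ℕ)) : Prop := ∀ a ∈ A, ∃ b ∈ B, a ⊆ b

/-- The meet `A ∧ B` of two set partitions. -/
def meetP (A B : Finset (Finset ℕ)) : Finset (Finset ℕ) :=
  ((A ×ˢ B).image fun p => p.1 ∩ p.2).filter (·.Nonempty)

/-- The set partition `{[n]}` with a single part (empty if `n = 0`). -/
def onePartP (n : ℕ) : Finset (Finset ℕ) := if n = 0 then ∅ else {ground n}

/-- The finite set of set partitions of `[n]` satisfying a predicate `P`. -/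
def SPs (n : ℕ) (P : Finset (Finset ℕ) → Prop) : Finset (Finset (Finset ℕ)) :=
  (ground n).powerset.powerset.filter fun A => IsSetPartition n A ∧ P A

/-- Covering relation for `≤_*`: `B` covers `A` if `B` is obtained from `A` by merging two
parts `a, a'` with every element of `a` smaller than every element of `a'`. -/
def coverStar (A B : Finset (Finset ℕ)) : Prop :=
  ∃ a ∈ A, ∃ a' ∈ A, a ≠ a' ∧ (∀ x ∈ a, ∀ y ∈ a', x < y) ∧
    B = insert (a ∪ a') ((A.erase a).erase a')

/-- The order `≤_*` on set partitions. -/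
def leStar : Finset (Finset ℕ) → Finset (Finset ℕ) → Prop :=
  Relation.ReflTransGen coverStar

/-- Restriction `A↓_S` of a set partition to the entries in `S`. -/
def restrictP (A : Finset (Finset ℕ)) (S : Finset ℕ) : Finset (Finset ℕ) :=
  (A.image (· ∩ S)).filter (·.Nonempty)

/-- The standardization map of a finite set `S`: sends the `i`-th smallest element of `S`
to `i` (1-indexed). -/
def stMap (S : Finset ℕ) (x : ℕ) : ℕ := (S.filter (· ≤ x)).card

/-- Standardization of a set partition: relabel its entries to `{1,…,m}` preserving order. -/
def stdP (A : Finset (Finset ℕ)) : Finset (Finset ℕ) :=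
  A.image fun b => b.image (stMap (A.sup id))

/-- The map raising `{1,…,|S|}` order-preservingly onto `S`. -/
def raiseMap (S : Finset ℕ) (x : ℕ) : ℕ := (S.sort (· ≤ ·)).getD (x - 1) 0

/-- `A↑_S`: raise the entries of `A` order-preservingly so the ground set becomes `S`. -/
def raiseP (S : Finset ℕ) (A : Finset (Finset ℕ)) : Finset (Finset ℕ) :=
  A.image fun b => b.image (raiseMap S)

/-- `IsShuffle l₁ l₂ l`: `l` is a shuffle (interleaving) of `l₁` and `l₂`. -/
inductive IsShuffle {α : Type*} : List α → List α → List α → Prop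
  | nil : IsShuffle [] [] []
  | left {a : α} {l₁ l₂ l : List α} : IsShuffle l₁ l₂ l → IsShuffle (a :: l₁) l₂ (a :: l)
  | right {a : α} {l₁ l₂ l : List α} : IsShuffle l₁ l₂ l → IsShuffle l₁ (a :: l₂) (a :: l)

/-- A word is Lyndon if it is nonempty and lexicographically strictly smaller than all of
its proper cyclic rotations. -/
def LyndonWord {α : Type*} (lt : α → α → Prop) (w : List α) : Prop :=
  w ≠ [] ∧ ∀ i, 0 < i → i < w.length → List.Lex lt w (w.rotate i)

/-- A set partition is Lyndon (with respect to a total order `lt` on atomic set partitions)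
if its atomic factorization is a Lyndon word. -/
def LyndonPartition (lt : ℕ × Finset (Finset ℕ) → ℕ × Finset (Finset ℕ) → Prop)
    (n : ℕ) (A : Finset (Finset ℕ)) : Prop :=
  ∃ L, AtomicFactorization n A L ∧ LyndonWord lt L

/-! ### Set compositions -/

/-- `Φ` is a set composition of `[n]`: an ordered sequence of nonempty pairwise disjoint
sets whose union is `[n]`. -/
def IsSetComposition (n : ℕ) (Φ : List (Finset ℕ)) : Prop :=
  (∀ B ∈ Φ, B.Nonempty) ∧ Φ.Pairwise Disjoint ∧ Φ.foldr (· ∪ ·) ∅ = ground n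

/-- Shift every entry of every part of a set composition by `n`. -/
def shiftC (n : ℕ) (Φ : List (Finset ℕ)) : List (Finset ℕ) :=
  Φ.map (·.image (· + n))

/-- Shifted concatenation `Φ|Ψ` of set compositions, `Φ ⊨ [n]`. -/
def concatC (n : ℕ) (Φ Ψ : List (Finset ℕ)) : List (Finset ℕ) := Φ ++ shiftC n Ψ

/-- An atomic set composition: nonempty and not a nontrivial shifted concatenation. -/
def AtomicC (n : ℕ) (Φ : List (Finset ℕ)) : Prop :=
  IsSetComposition n Φ ∧ 0 < n ∧
  ¬ ∃ k Ψ Γ, 0 < k ∧ k < n ∧ IsSetComposition k Ψ ∧ IsSetComposition (n - k) Γ ∧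
      Φ = concatC k Ψ Γ

/-- Shifted concatenation of a list of (size, set composition) pairs. -/
def concatListC : List (ℕ × List (Finset ℕ)) → ℕ × List (Finset ℕ)
  | [] => (0, [])
  | p :: L => ((concatListC L).1 + p.1, concatC p.1 p.2 (concatListC L).2)

/-- `L` is the atomic factorization `Φ^!` of the set composition `Φ ⊨ [n]`. -/
def AtomicFactorizationC (n : ℕ) (Φ : List (Finset ℕ))
    (L : List (ℕ × List (Finset ℕ))) : Prop :=
  (∀ p ∈ L, AtomicC p.1 p.2) ∧ concatListC L = (n, Φ)

/-- Covering relation for `≤_*` on set compositions: merge two adjacent parts `a, b` with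
every element of `a` smaller than every element of `b`. -/
def coverStarC (Φ Ψ : List (Finset ℕ)) : Prop :=
  ∃ L₁ a b L₂, Φ = L₁ ++ a :: b :: L₂ ∧ (∀ x ∈ a, ∀ y ∈ b, x < y) ∧
    Ψ = L₁ ++ (a ∪ b) :: L₂

/-- The order `≤_*` on set compositions. -/
def leStarC : List (Finset ℕ) → List (Finset ℕ) → Prop :=
  Relation.ReflTransGen coverStarC

/-- The meet operation `Φ ∧ Ψ` on set compositions: the nonempty intersections
`Φ_i ∩ Ψ_j` in lexicographic order of `(i, j)`. -/
def meetC (Φ Ψ : List (Finset ℕ)) : List (Finset ℕ) :=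
  (Φ.flatMap fun a => Ψ.map fun b => a ∩ b).filter (·.Nonempty)

/-- The one-part set composition `([n])` (empty if `n = 0`). -/
def onePartC (n : ℕ) : List (Finset ℕ) := if n = 0 then [] else [ground n]

/-- Lists of length `k` with all entries in `s`. -/
def listsOfLen (s : Finset (Finset ℕ)) : ℕ → Finset (List (Finset ℕ))
  | 0 => {[]}
  | k + 1 => (s ×ˢ listsOfLen s k).image fun p => p.1 :: p.2

/-- The finite set of set compositions of `[n]` satisfying a predicate `P`. -/
def SCs (n : ℕ) (P : List (Finset ℕ) → Prop) : Finset (List (Finset ℕ)) :=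
  ((Finset.range (n + 1)).biUnion fun k => listsOfLen (ground n).powerset k).filter
    fun Φ => IsSetComposition n Φ ∧ P Φ

/-- `Φ↑_S`: raise the entries of a set composition order-preservingly into `S`. -/
def raiseC (S : Finset ℕ) (Φ : List (Finset ℕ)) : List (Finset ℕ) :=
  Φ.map (·.image (raiseMap S))

/-- Standardization of a set composition. -/
def stdC (Φ : List (Finset ℕ)) : List (Finset ℕ) :=
  Φ.map (·.image (stMap (Φ.foldr (· ∪ ·) ∅)))

/-- `α(Φ)`: the composition of part sizes of `Φ`. -/
def alphaC (Φ : List (Finset ℕ)) : List ℕ := Φ.map Finset.card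

/-- The order `≤_#` on set compositions: `Φ ≤_# Ψ` iff `α(Φ) = α(Ψ)` and each atomic factor
of `Φ` is the standardization of the corresponding consecutive block of parts of `Ψ`. -/
def leSharp (Φ Ψ : List (Finset ℕ)) : Prop :=
  alphaC Φ = alphaC Ψ ∧
  ∃ (L : List (ℕ × List (Finset ℕ))) (Bs : List (List (Finset ℕ))),
    (∀ p ∈ L, AtomicC p.1 p.2) ∧ (concatListC L).2 = Φ ∧
    Ψ = Bs.flatten ∧ List.Forall₂ (fun b (l : ℕ × List (Finset ℕ)) => stdC b = l.2) Bs L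

/-! ### Index types -/

/-- Set partitions with their sizes. -/
abbrev SPIdx := {x : ℕ × Finset (Finset ℕ) // IsSetPartition x.1 x.2}

/-- Atomic set partitions with their sizes. -/
abbrev AtomIdx := {x : ℕ × Finset (Finset ℕ) // AtomicP x.1 x.2}

/-- Set compositions with their sizes. -/
abbrev SCIdx := {x : ℕ × List (Finset ℕ) // IsSetComposition x.1 x.2}

/-- Atomic set compositions with their sizes. -/
abbrev AtomCIdx := {x : ℕ × List (Finset ℕ) // AtomicC x.1 x.2}

namespace CB

/-- Glue the blocks of `a :: l`: `f i` says whether block `i` is merged with block `i+1`. -/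
def go (f : ℕ → Bool) (a : Finset ℕ) : List (Finset ℕ) → List (Finset ℕ)
  | [] => [a]
  | b :: l =>
      if f 0 then go (fun i => f (i + 1)) (a ∪ b) l
      else a :: go (fun i => f (i + 1)) b l

def glueF (f : ℕ → Bool) : List (Finset ℕ) → List (Finset ℕ)
  | [] => []
  | a :: l => go f a l

lemma go_congr {f g : ℕ → Bool} (h : ∀ i, f i = g i) (a : Finset ℕ)
    (l : List (Finset ℕ)) : go f a l = go g a l := by
  have : f = g := funext h
  rw [this]

lemma go_cons_true {f : ℕ → Bool} (h : f 0 = true) (a b : Finset ℕ) (l : List (Finset ℕ)) :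
    go f a (b :: l) = go (fun i => f (i + 1)) (a ∪ b) l := by
  simp [go, h]

lemma go_cons_false {f : ℕ → Bool} (h : f 0 = false) (a b : Finset ℕ) (l : List (Finset ℕ)) :
    go f a (b :: l) = a :: go (fun i => f (i + 1)) b l := by
  simp [go, h]

lemma go_false (a : Finset ℕ) (l : List (Finset ℕ)) :
    go (fun _ => false) a l = a :: l := by
  induction l generalizing a with
  | nil => rfl
  | cons b l ih => simp [go, ih]

lemma glueF_false (l : List (Finset ℕ)) : glueF (fun _ => false) l = l := by
  cases l with
  | nil => rfl
  | cons a l => exact go_false a l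

lemma go_head (f : ℕ → Bool) (a : Finset ℕ) (l : List (Finset ℕ)) :
    ∃ B rest, go f a l = B :: rest ∧ a ⊆ B ∧
      ∀ d, go f (d ∪ a) l = (d ∪ B) :: rest := by
  induction l generalizing f a with
  | nil => exact ⟨a, [], rfl, subset_rfl, fun d => rfl⟩
  | cons b l ih =>
    cases hf : f 0 with
    | true =>
      obtain ⟨B, rest, h1, h2, h3⟩ := ih (fun i => f (i + 1)) (a ∪ b)
      refine ⟨B, rest, by rw [go_cons_true hf, h1], Finset.subset_union_left.trans h2,
        fun d => ?_⟩
      rw [go_cons_true hf, Finset.union_assoc]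
      exact h3 d
    | false =>
      exact ⟨a, go (fun i => f (i + 1)) b l, go_cons_false hf a b l, subset_rfl,
        fun d => go_cons_false hf (d ∪ a) b l⟩

lemma go_foldr (f : ℕ → Bool) (a : Finset ℕ) (l : List (Finset ℕ)) :
    (go f a l).foldr (· ∪ ·) ∅ = a ∪ l.foldr (· ∪ ·) ∅ := by
  induction l generalizing f a with
  | nil => simp [go]
  | cons b l ih =>
    cases hf : f 0 with
    | true => rw [go_cons_true hf, ih]; simp [Finset.union_assoc]
    | false => rw [go_cons_false hf]; simp [ih, Finset.union_assoc]

lemma go_nonempty (f : ℕ → Bool) (a : Finset ℕ) (l : List (Finset ℕ))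
    (ha : a.Nonempty) (hl : ∀ B ∈ l, B.Nonempty) :
    ∀ B ∈ go f a l, B.Nonempty := by
  induction l generalizing f a with
  | nil => simpa [go] using ha
  | cons b l ih =>
    cases hf : f 0 with
    | true =>
      rw [go_cons_true hf]
      obtain ⟨x, hx⟩ := ha
      exact ih _ _ ⟨x, Finset.mem_union_left _ hx⟩ fun B hB => hl B (List.mem_cons_of_mem _ hB)
    | false =>
      rw [go_cons_false hf]
      intro B hB
      rcases List.mem_cons.1 hB with rfl | hB
      · exact ha
      · exact ih _ _ (hl b (List.mem_cons_self)) (fun B hB => hl B (List.mem_cons_of_mem _ hB)) B hB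

lemma mem_subset_foldr {B : Finset ℕ} {l : List (Finset ℕ)} (h : B ∈ l) :
    B ⊆ l.foldr (· ∪ ·) ∅ := by
  induction l with
  | nil => simp at h
  | cons a l ih =>
    rcases List.mem_cons.1 h with rfl | h
    · exact Finset.subset_union_left
    · exact (ih h).trans Finset.subset_union_right

lemma disjoint_foldr {a : Finset ℕ} {l : List (Finset ℕ)} (h : ∀ c ∈ l, Disjoint a c) :
    Disjoint a (l.foldr (· ∪ ·) ∅) := by
  induction l with
  | nil => simp
  | cons b l ih =>
    simp only [List.foldr_cons, Finset.disjoint_union_right]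
    exact ⟨h b (List.mem_cons_self), ih fun c hc => h c (List.mem_cons_of_mem _ hc)⟩

lemma pairwise_union_cons {a b : Finset ℕ} {l : List (Finset ℕ)}
    (h : (a :: b :: l).Pairwise Disjoint) : ((a ∪ b) :: l).Pairwise Disjoint := by
  cases h with
  | cons hab htl =>
    cases htl with
    | cons hbc hll =>
      refine List.Pairwise.cons (fun c hc => ?_) hll
      exact Finset.disjoint_union_left.2 ⟨hab c (List.mem_cons_of_mem _ hc), hbc c hc⟩

lemma go_pairwise (f : ℕ → Bool) (a : Finset ℕ) (l : List (Finset ℕ))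
    (h : (a :: l).Pairwise Disjoint) : (go f a l).Pairwise Disjoint := by
  induction l generalizing f a with
  | nil => simp [go]
  | cons b l ih =>
    cases hf : f 0 with
    | true =>
      rw [go_cons_true hf]
      exact ih _ _ (pairwise_union_cons h)
    | false =>
      rw [go_cons_false hf]
      cases h with
      | cons hab htl =>
        refine List.Pairwise.cons (fun B hB => ?_) (ih _ _ htl)
        have hsub : B ⊆ (b :: l).foldr (· ∪ ·) ∅ := by
          have := mem_subset_foldr hB
          rwa [go_foldr] at this
        exact Finset.disjoint_of_subset_right hsub (disjoint_foldr hab)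

lemma pairwise_eq {L : List (Finset ℕ)} (h : L.Pairwise Disjoint) {B C : Finset ℕ}
    (hB : B ∈ L) (hC : C ∈ L) {x : ℕ} (hxB : x ∈ B) (hxC : x ∈ C) : B = C := by
  by_contra hne
  haveI : Std.Symm (α := Finset ℕ) Disjoint := ⟨fun _ _ hd => hd.symm⟩
  have hd : Disjoint B C := h.forall hB hC hne
  exact (Finset.disjoint_left.1 hd hxB) hxC

end CB

namespace CB

def Asc (L : List (Finset ℕ)) (i : ℕ) : Prop :=
  ∀ x ∈ L.getD i ∅, ∀ y ∈ L.getD (i + 1) ∅, x < y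

lemma go_recover (f : ℕ → Bool) (a : Finset ℕ) (l : List (Finset ℕ))
    (hne : ∀ B ∈ a :: l, B.Nonempty) (hpd : (a :: l).Pairwise Disjoint) :
    ∀ i, i + 1 < (a :: l).length →
      ((∃ B ∈ go f a l, (a :: l).getD i ∅ ⊆ B ∧ (a :: l).getD (i + 1) ∅ ⊆ B) ↔
        f i = true) := by
  induction l generalizing f a with
  | nil => intro i hi; simp at hi
  | cons b l ih =>
    intro i hi
    have hane : a.Nonempty := hne a (List.mem_cons_self)
    have hbne : b.Nonempty := hne b (List.mem_cons_of_mem _ (List.mem_cons_self))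
    have hne' : ∀ B ∈ b :: l, B.Nonempty := fun B hB => hne B (List.mem_cons_of_mem _ hB)
    have hab : ∀ c ∈ b :: l, Disjoint a c := fun c hc => List.rel_of_pairwise_cons hpd hc
    have htl : (b :: l).Pairwise Disjoint := hpd.of_cons
    cases hf : f 0 with
    | false =>
      rw [go_cons_false hf]
      cases i with
      | zero =>
        simp only [List.getD_cons_zero, List.getD_cons_succ, hf, Bool.false_eq_true,
          iff_false]
        rintro ⟨B, hB, haB, hbB⟩
        rcases List.mem_cons.1 hB with rfl | hB
        · obtain ⟨x, hx⟩ := hbne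
          exact (Finset.disjoint_right.1 (hab b (List.mem_cons_self)) hx) (hbB hx)
        · have hsub : B ⊆ (b :: l).foldr (· ∪ ·) ∅ := by
            have := mem_subset_foldr hB
            rwa [go_foldr] at this
          obtain ⟨x, hx⟩ := hane
          exact Finset.disjoint_left.1 (disjoint_foldr hab) hx (hsub (haB hx))
      | succ j =>
        simp only [List.getD_cons_succ]
        have hij : j + 1 < (b :: l).length := by
          simp only [List.length_cons] at hi ⊢; omega
        rw [← ih (fun i => f (i + 1)) b hne' htl j hij]
        constructor
        · rintro ⟨B, hB, h1, h2⟩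
          rcases List.mem_cons.1 hB with rfl | hB
          · exfalso
            have hjlt : j < (b :: l).length := by omega
            have hmem : (b :: l).getD j ∅ ∈ b :: l := by
              rw [List.getD_eq_getElem _ _ hjlt]
              exact List.getElem_mem _
            obtain ⟨x, hx⟩ := hne' _ hmem
            exact Finset.disjoint_right.1 (hab _ hmem) hx (h1 hx)
          · exact ⟨B, hB, h1, h2⟩
        · rintro ⟨B, hB, h1, h2⟩
          exact ⟨B, List.mem_cons_of_mem _ hB, h1, h2⟩
    | true =>
      rw [go_cons_true hf]
      have hpd' : ((a ∪ b) :: l).Pairwise Disjoint := pairwise_union_cons hpd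
      have hne'' : ∀ B ∈ (a ∪ b) :: l, B.Nonempty := by
        intro B hB
        rcases List.mem_cons.1 hB with rfl | hB
        · obtain ⟨x, hx⟩ := hane; exact ⟨x, Finset.mem_union_left _ hx⟩
        · exact hne B (List.mem_cons_of_mem _ (List.mem_cons_of_mem _ hB))
      cases i with
      | zero =>
        simp only [List.getD_cons_zero, List.getD_cons_succ, hf, iff_true]
        obtain ⟨B, rest, hBr, hsub, -⟩ := go_head (fun i => f (i + 1)) (a ∪ b) l
        exact ⟨B, by rw [hBr]; exact List.mem_cons_self,
          Finset.subset_union_left.trans hsub, Finset.subset_union_right.trans hsub⟩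
      | succ j =>
        have hij : j + 1 < ((a ∪ b) :: l).length := by
          simp only [List.length_cons] at hi ⊢; omega
        have IH := ih (fun i => f (i + 1)) (a ∪ b) hne'' hpd' j hij
        simp only [List.getD_cons_succ]
        cases j with
        | zero =>
          simp only [List.getD_cons_zero, List.getD_cons_succ] at IH ⊢
          rw [← IH]
          constructor
          · rintro ⟨B, hB, h1, h2⟩
            obtain ⟨B₀, rest, hBr, hsub, -⟩ := go_head (fun i => f (i + 1)) (a ∪ b) l
            have hBmem : B₀ ∈ go (fun i => f (i + 1)) (a ∪ b) l := by
              rw [hBr]; exact List.mem_cons_self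
            obtain ⟨x, hx⟩ := hbne
            have hBeq : B = B₀ := pairwise_eq (go_pairwise _ _ _ hpd') hB hBmem (h1 hx)
              (hsub (Finset.mem_union_right _ hx))
            exact ⟨B, hB, by rw [hBeq]; exact hsub, h2⟩
          · rintro ⟨B, hB, h1, h2⟩
            exact ⟨B, hB, Finset.subset_union_right.trans h1, h2⟩
        | succ k =>
          simp only [List.getD_cons_succ] at IH ⊢
          exact IH

lemma go_head_lt (f : ℕ → Bool) (a : Finset ℕ) (l : List (Finset ℕ))
    (hne : ∀ B ∈ a :: l, B.Nonempty)
    (hasc : ∀ i, i + 1 < (a :: l).length → f i = true → Asc (a :: l) i)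
    {u : ℕ} (hu : ∀ w ∈ a, u < w) :
    ∀ B rest, go f a l = B :: rest → ∀ v ∈ B, u < v := by
  induction l generalizing f a u with
  | nil =>
    intro B rest h v hv
    simp only [go, List.cons.injEq] at h
    exact hu v (by rw [h.1]; exact hv)
  | cons b l ih =>
    intro B rest h v hv
    have hane : a.Nonempty := hne a (List.mem_cons_self)
    have hbne : b.Nonempty := hne b (List.mem_cons_of_mem _ (List.mem_cons_self))
    cases hf : f 0 with
    | false =>
      rw [go_cons_false hf] at h
      injection h with h1 _
      exact hu v (by rw [h1]; exact hv)
    | true =>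
      rw [go_cons_true hf] at h
      have hasc0 : Asc (a :: b :: l) 0 := hasc 0 (by simp) hf
      have hne'' : ∀ B ∈ (a ∪ b) :: l, B.Nonempty := by
        intro B hB
        rcases List.mem_cons.1 hB with rfl | hB
        · obtain ⟨x, hx⟩ := hane; exact ⟨x, Finset.mem_union_left _ hx⟩
        · exact hne B (List.mem_cons_of_mem _ (List.mem_cons_of_mem _ hB))
      have hasc' : ∀ i, i + 1 < ((a ∪ b) :: l).length → (fun i => f (i + 1)) i = true →
          Asc ((a ∪ b) :: l) i := by
        intro i hi hfi
        cases i with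
        | zero =>
          intro x hx y hy
          have hasc1 : Asc (a :: b :: l) 1 := hasc 1 (by simp only [List.length_cons] at hi ⊢; omega) hfi
          simp only [List.getD_cons_zero, List.getD_cons_succ] at hx hy ⊢
          rcases Finset.mem_union.1 hx with hx | hx
          · obtain ⟨z, hz⟩ := hbne
            exact lt_trans (hasc0 x hx z hz) (hasc1 z hz y hy)
          · exact hasc1 x hx y hy
        | succ k =>
          intro x hx y hy
          have := hasc (k + 2) (by simp only [List.length_cons] at hi ⊢; omega) hfi
          simp only [List.getD_cons_succ] at hx hy this ⊢
          exact this x hx y hy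
      have hu' : ∀ w ∈ a ∪ b, u < w := by
        intro w hw
        rcases Finset.mem_union.1 hw with hw | hw
        · exact hu w hw
        · obtain ⟨z, hz⟩ := hane
          exact lt_trans (hu z hz) (hasc0 z hz w hw)
      exact ih (fun i => f (i + 1)) (a ∪ b) hne'' hasc' hu' B rest h v hv

end CB

namespace CB

lemma beq_succ_succ (i j : ℕ) : ((i + 1 : ℕ) == (j + 1)) = ((i : ℕ) == j) := by
  rw [Bool.eq_iff_iff]
  simp

lemma beq_succ_zero (i : ℕ) : ((i + 1 : ℕ) == (0 : ℕ)) = false := by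
  rw [Bool.eq_false_iff]
  simp

lemma go_split (f : ℕ → Bool) (a : Finset ℕ) (l : List (Finset ℕ))
    {L₁ L₂ : List (Finset ℕ)} {B C : Finset ℕ}
    (h : go f a l = L₁ ++ B :: C :: L₂) :
    ∃ j, j + 1 < (a :: l).length ∧ f j = false ∧
      (a :: l).getD j ∅ ⊆ B ∧ (a :: l).getD (j + 1) ∅ ⊆ C ∧
      go (fun i => f i || (i == j)) a l = L₁ ++ (B ∪ C) :: L₂ := by
  induction l generalizing f a L₁ with
  | nil =>
    exfalso
    cases L₁ <;> simp [go] at h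
  | cons b l ih =>
    cases hf : f 0 with
    | true =>
      rw [go_cons_true hf] at h
      obtain ⟨j, hj, hfj, h1, h2, h3⟩ := ih (fun i => f (i + 1)) (a ∪ b) h
      refine ⟨j + 1, by simp only [List.length_cons] at hj ⊢; omega, hfj, ?_, ?_, ?_⟩
      · cases j with
        | zero =>
          simp only [List.getD_cons_zero, List.getD_cons_succ] at h1 ⊢
          exact Finset.subset_union_right.trans h1
        | succ k =>
          simp only [List.getD_cons_succ] at h1 ⊢
          exact h1
      · simp only [List.getD_cons_succ] at h2 ⊢
        exact h2
      · rw [go_cons_true (f := fun i => f i || (i == j + 1)) (by simp [hf])]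
        rw [go_congr (g := fun i => f (i + 1) || (i == j)) (fun i => by simp [beq_succ_succ]) _ _]
        exact h3
    | false =>
      rw [go_cons_false hf] at h
      cases L₁ with
      | nil =>
        simp only [List.nil_append, List.cons.injEq] at h
        obtain ⟨rfl, h2⟩ := h
        obtain ⟨B₀, rest, hBr, hsub, hall⟩ := go_head (fun i => f (i + 1)) b l
        rw [hBr] at h2
        obtain ⟨rfl, rfl⟩ : B₀ = C ∧ rest = L₂ := by
          simpa [List.cons.injEq] using h2
        refine ⟨0, by simp, hf, by simp, by simpa using hsub, ?_⟩
        rw [go_cons_true (f := fun i => f i || (i == 0)) (by simp)]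
        rw [go_congr (g := fun i => f (i + 1)) (fun i => by simp [beq_succ_zero]) (a ∪ b) l]
        simpa using hall a
      | cons x L₁' =>
        simp only [List.cons_append, List.cons.injEq] at h
        obtain ⟨rfl, h2⟩ := h
        obtain ⟨j, hj, hfj, h1, h2', h3⟩ := ih (fun i => f (i + 1)) b h2
        refine ⟨j + 1, by simp only [List.length_cons] at hj ⊢; omega, hfj, ?_, ?_, ?_⟩
        · simpa only [List.getD_cons_succ] using h1
        · simpa only [List.getD_cons_succ] using h2'
        · rw [go_cons_false (f := fun i => f i || (i == j + 1)) (by simp [hf])]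
          rw [go_congr (g := fun i => f (i + 1) || (i == j)) (fun i => by simp [beq_succ_succ]) _ _]
          rw [h3]
          rfl

lemma go_merge (f : ℕ → Bool) (a : Finset ℕ) (l : List (Finset ℕ)) (j : ℕ)
    (hne : ∀ B ∈ a :: l, B.Nonempty)
    (hasc : ∀ i, i + 1 < (a :: l).length → (f i = true ∨ i = j) → Asc (a :: l) i)
    (hj : j + 1 < (a :: l).length) (hfj : f j = false) :
    ∃ L₁ B C L₂, go f a l = L₁ ++ B :: C :: L₂ ∧ (∀ x ∈ B, ∀ y ∈ C, x < y) ∧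
      go (fun i => f i || (i == j)) a l = L₁ ++ (B ∪ C) :: L₂ := by
  induction l generalizing f a j with
  | nil => simp at hj
  | cons b l ih =>
    have hane : a.Nonempty := hne a (List.mem_cons_self)
    have hbne : b.Nonempty := hne b (List.mem_cons_of_mem _ (List.mem_cons_self))
    have hne' : ∀ B ∈ b :: l, B.Nonempty := fun B hB => hne B (List.mem_cons_of_mem _ hB)
    have hne'' : ∀ B ∈ (a ∪ b) :: l, B.Nonempty := by
      intro B hB
      rcases List.mem_cons.1 hB with rfl | hB
      · obtain ⟨x, hx⟩ := hane; exact ⟨x, Finset.mem_union_left _ hx⟩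
      · exact hne B (List.mem_cons_of_mem _ (List.mem_cons_of_mem _ hB))
    cases j with
    | zero =>
      obtain ⟨B₀, rest, hBr, hsub, hall⟩ := go_head (fun i => f (i + 1)) b l
      have hasc0 : Asc (a :: b :: l) 0 := hasc 0 (by simp) (Or.inr rfl)
      refine ⟨[], a, B₀, rest, ?_, ?_, ?_⟩
      · rw [go_cons_false hfj, hBr]; rfl
      · intro x hx v hv
        have hxb : ∀ y ∈ b, x < y := by
          intro y hy
          exact hasc0 x (by simpa using hx) y (by simpa using hy)
        refine go_head_lt (fun i => f (i + 1)) b l hne' ?_ hxb B₀ rest hBr v hv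
        intro i hi hfi
        intro z hz w hw
        have := hasc (i + 1) (by simp only [List.length_cons] at hi ⊢; omega) (Or.inl hfi)
        simp only [Asc, List.getD_cons_succ] at this
        exact this z hz w hw
      · rw [go_cons_true (f := fun i => f i || (i == 0)) (by simp)]
        rw [go_congr (f := fun i => (fun i => f i || (i == 0)) (i + 1))
          (g := fun i => f (i + 1)) (fun i => by simp)]
        simpa using hall a
    | succ k =>
      cases hf : f 0 with
      | true =>
        have hasc0 : Asc (a :: b :: l) 0 := hasc 0 (by simp) (Or.inl hf)
        have hasc' : ∀ i, i + 1 < ((a ∪ b) :: l).length →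
            ((fun i => f (i + 1)) i = true ∨ i = k) → Asc ((a ∪ b) :: l) i := by
          intro i hi hyp
          cases i with
          | zero =>
            have hasc1 : Asc (a :: b :: l) 1 := by
              refine hasc 1 (by simp only [List.length_cons] at hi ⊢; omega) ?_
              rcases hyp with h | h
              · exact Or.inl h
              · exact Or.inr (by omega)
            intro x hx y hy
            simp only [List.getD_cons_zero, List.getD_cons_succ] at hx hy ⊢
            rcases Finset.mem_union.1 hx with hx | hx
            · obtain ⟨z, hz⟩ := hbne
              exact lt_trans (hasc0 x hx z hz) (hasc1 z hz y hy)
            · exact hasc1 x hx y hy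
          | succ m =>
            have := hasc (m + 2) (by simp only [List.length_cons] at hi ⊢; omega)
              (Or.imp (fun h => h) (fun h => by omega) hyp)
            intro x hx y hy
            simp only [List.getD_cons_succ] at hx hy this ⊢
            exact this x hx y hy
        obtain ⟨L₁, B, C, L₂, e1, e2, e3⟩ := ih (fun i => f (i + 1)) (a ∪ b) k hne'' hasc'
          (by simp only [List.length_cons] at hj ⊢; omega) hfj
        refine ⟨L₁, B, C, L₂, ?_, e2, ?_⟩
        · rw [go_cons_true hf]; exact e1
        · rw [go_cons_true (f := fun i => f i || (i == k + 1)) (by simp [hf])]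
          rw [go_congr (g := fun i => f (i + 1) || (i == k)) (fun i => by simp [beq_succ_succ]) _ _]
          exact e3
      | false =>
        have hasc' : ∀ i, i + 1 < (b :: l).length →
            ((fun i => f (i + 1)) i = true ∨ i = k) → Asc (b :: l) i := by
          intro i hi hyp
          have := hasc (i + 1) (by simp only [List.length_cons] at hi ⊢; omega)
            (Or.imp (fun h => h) (fun h => by omega) hyp)
          intro x hx y hy
          simp only [List.getD_cons_succ] at hx hy this ⊢
          exact this x hx y hy
        obtain ⟨L₁, B, C, L₂, e1, e2, e3⟩ := ih (fun i => f (i + 1)) b k hne' hasc'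
          (by simp only [List.length_cons] at hj ⊢; omega) hfj
        refine ⟨a :: L₁, B, C, L₂, ?_, e2, ?_⟩
        · rw [go_cons_false hf, e1]; rfl
        · rw [go_cons_false (f := fun i => f i || (i == k + 1)) (by simp [hf])]
          rw [go_congr (g := fun i => f (i + 1) || (i == k)) (fun i => by simp [beq_succ_succ]) _ _]
          rw [e3]
          rfl

end CB

namespace CB

lemma glueF_isSetComposition {n : ℕ} {P : List (Finset ℕ)} (hP : IsSetComposition n P)
    (f : ℕ → Bool) : IsSetComposition n (glueF f P) := by
  obtain ⟨hne, hpd, hfold⟩ := hP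
  cases P with
  | nil => exact ⟨hne, hpd, hfold⟩
  | cons a l =>
    refine ⟨go_nonempty f a l (hne a (List.mem_cons_self))
      (fun B hB => hne B (List.mem_cons_of_mem _ hB)), go_pairwise f a l hpd, ?_⟩
    rw [show glueF f (a :: l) = go f a l from rfl, go_foldr]
    exact hfold

lemma glueF_recover {P : List (Finset ℕ)} (hne : ∀ B ∈ P, B.Nonempty)
    (hpd : P.Pairwise Disjoint) (f : ℕ → Bool) {i : ℕ} (hi : i + 1 < P.length) :
    (∃ B ∈ glueF f P, P.getD i ∅ ⊆ B ∧ P.getD (i + 1) ∅ ⊆ B) ↔ f i = true := by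
  cases P with
  | nil => simp at hi
  | cons a l => exact go_recover f a l hne hpd i hi

lemma glueF_split {P : List (Finset ℕ)} {f : ℕ → Bool}
    {L₁ L₂ : List (Finset ℕ)} {B C : Finset ℕ}
    (h : glueF f P = L₁ ++ B :: C :: L₂) :
    ∃ j, j + 1 < P.length ∧ f j = false ∧
      P.getD j ∅ ⊆ B ∧ P.getD (j + 1) ∅ ⊆ C ∧
      glueF (fun i => f i || (i == j)) P = L₁ ++ (B ∪ C) :: L₂ := by
  cases P with
  | nil => exfalso; cases L₁ <;> simp [glueF] at h
  | cons a l => exact go_split f a l h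

lemma glueF_merge {P : List (Finset ℕ)} (hne : ∀ B ∈ P, B.Nonempty) {f : ℕ → Bool} {j : ℕ}
    (hasc : ∀ i, i + 1 < P.length → (f i = true ∨ i = j) → Asc P i)
    (hj : j + 1 < P.length) (hfj : f j = false) :
    ∃ L₁ B C L₂, glueF f P = L₁ ++ B :: C :: L₂ ∧ (∀ x ∈ B, ∀ y ∈ C, x < y) ∧
      glueF (fun i => f i || (i == j)) P = L₁ ++ (B ∪ C) :: L₂ := by
  cases P with
  | nil => simp at hj
  | cons a l => exact go_merge f a l j hne hasc hj hfj

/-! ### The bijection data -/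

noncomputable def memB (T : Finset ℕ) : ℕ → Bool := fun i => decide (i ∈ T)

lemma memB_empty : memB ∅ = fun _ => false := by
  funext i; simp [memB]

lemma memB_insert (j : ℕ) (T : Finset ℕ) :
    memB (insert j T) = fun i => memB T i || (i == j) := by
  funext i
  by_cases h : i = j <;> simp [memB, Finset.mem_insert, h]

noncomputable def recoverT (P Φ : List (Finset ℕ)) : Finset ℕ :=
  (Finset.range (P.length - 1)).filter
    (fun i => ∃ B ∈ Φ, P.getD i ∅ ⊆ B ∧ P.getD (i + 1) ∅ ⊆ B)

noncomputable def goodT (P : List (Finset ℕ)) : Finset ℕ :=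
  (Finset.range (P.length - 1)).filter (fun i => Asc P i)

lemma recover_glue {P : List (Finset ℕ)} (hne : ∀ B ∈ P, B.Nonempty)
    (hpd : P.Pairwise Disjoint) {T : Finset ℕ} (hT : T ⊆ Finset.range (P.length - 1)) :
    recoverT P (glueF (memB T) P) = T := by
  ext i
  simp only [recoverT, Finset.mem_filter, Finset.mem_range]
  constructor
  · rintro ⟨hi, hex⟩
    have := (glueF_recover hne hpd (memB T) (by omega)).1 hex
    simpa [memB] using this
  · intro hiT
    have hi : i < P.length - 1 := Finset.mem_range.1 (hT hiT)
    refine ⟨hi, (glueF_recover hne hpd (memB T) (by omega)).2 ?_⟩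
    simp [memB, hiT]

lemma glue_up {P : List (Finset ℕ)} (hne : ∀ B ∈ P, B.Nonempty) :
    ∀ (m : ℕ) (T T' : Finset ℕ), (T' \ T).card = m → T ⊆ T' → T' ⊆ goodT P →
      leStarC (glueF (memB T) P) (glueF (memB T') P) := by
  intro m
  induction m with
  | zero =>
    intro T T' hm hsub hG
    have h1 : T' ⊆ T := fun x hx => by
      by_contra hxT
      have : x ∈ T' \ T := Finset.mem_sdiff.2 ⟨hx, hxT⟩
      rw [Finset.card_eq_zero.1 hm] at this
      simp at this
    rw [Finset.Subset.antisymm hsub h1]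
    exact Relation.ReflTransGen.refl
  | succ m ihm =>
    intro T T' hm hsub hG
    have hnem : (T' \ T).Nonempty := Finset.card_pos.1 (by omega)
    obtain ⟨j, hj⟩ := hnem
    have hjT' : j ∈ T' := (Finset.mem_sdiff.1 hj).1
    have hjT : j ∉ T := (Finset.mem_sdiff.1 hj).2
    have hjG := hG hjT'
    rw [goodT, Finset.mem_filter, Finset.mem_range] at hjG
    have hasc : ∀ i, i + 1 < P.length → (memB T i = true ∨ i = j) → Asc P i := by
      intro i _ hyp
      rcases hyp with h | h
      · have hiT : i ∈ T := by simpa [memB] using h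
        have := hG (hsub hiT)
        rw [goodT, Finset.mem_filter] at this
        exact this.2
      · subst h
        exact hjG.2
    obtain ⟨L₁, B, C, L₂, e1, e2, e3⟩ := glueF_merge hne (f := memB T) (j := j)
      hasc (by omega) (by simp [memB, hjT])
    have hcov : coverStarC (glueF (memB T) P) (glueF (memB (insert j T)) P) := by
      refine ⟨L₁, B, C, L₂, e1, e2, ?_⟩
      rw [memB_insert]
      exact e3
    refine Relation.ReflTransGen.head hcov
      (ihm (insert j T) T' ?_ (Finset.insert_subset hjT' hsub) hG)
    rw [Finset.sdiff_insert, Finset.card_erase_of_mem hj, hm]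
    omega

lemma glue_down {P : List (Finset ℕ)}
    {T : Finset ℕ} {Ψ : List (Finset ℕ)} (hT : T ⊆ goodT P)
    (h : leStarC (glueF (memB T) P) Ψ) :
    ∃ T', T ⊆ T' ∧ T' ⊆ goodT P ∧ Ψ = glueF (memB T') P := by
  induction h with
  | refl => exact ⟨T, subset_rfl, hT, rfl⟩
  | tail h₁ h₂ ih =>
    obtain ⟨T', h1, h2, rfl⟩ := ih
    obtain ⟨L₁, B, C, L₂, e1, hlt, e2⟩ := h₂
    obtain ⟨j, hj, hfj, hB, hC, e3⟩ := glueF_split e1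
    refine ⟨insert j T', h1.trans (Finset.subset_insert _ _), ?_, ?_⟩
    · intro x hx
      rcases Finset.mem_insert.1 hx with rfl | hx
      · rw [goodT, Finset.mem_filter, Finset.mem_range]
        exact ⟨by omega, fun x hx y hy => hlt x (hB hx) y (hC hy)⟩
      · exact h2 hx
    · rw [e2, memB_insert]
      exact e3.symm

end CB


/-- the connected component of a minimal element `P` (a set composition all
of whose parts are singletons, i.e. a permutation) in the poset of set compositions of
`[n]` under `≤_*` is a boolean lattice on the set `{i : P_i < P_{i+1}}`. -/
theorem composition_component_boolean (n : ℕ) (P : List (Finset ℕ))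
    (hP : IsSetComposition n P) (hsing : ∀ p ∈ P, p.card = 1) :
    ∃ e : {Φ : List (Finset ℕ) // IsSetComposition n Φ ∧ leStarC P Φ} ≃
        {T : Finset ℕ // T ⊆ (Finset.range (P.length - 1)).filter
            (fun i => ∀ x ∈ P.getD i ∅, ∀ y ∈ P.getD (i + 1) ∅, x < y)},
      ∀ Φ Ψ, leStarC Φ.1 Ψ.1 ↔ (e Φ).1 ⊆ (e Ψ).1 := by
  classical
  have hne : ∀ B ∈ P, B.Nonempty := hP.1
  have hpd : P.Pairwise Disjoint := hP.2.1
  have hGood : (Finset.range (P.length - 1)).filter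
      (fun i => ∀ x ∈ P.getD i ∅, ∀ y ∈ P.getD (i + 1) ∅, x < y) = CB.goodT P := by
    ext i
    simp [CB.goodT, CB.Asc]
  have hrep : ∀ Φ : List (Finset ℕ), leStarC P Φ →
      ∃ T', T' ⊆ CB.goodT P ∧ Φ = CB.glueF (CB.memB T') P := by
    intro Φ hΦ
    have h0 : leStarC (CB.glueF (CB.memB ∅) P) Φ := by
      rwa [CB.memB_empty, CB.glueF_false]
    obtain ⟨T', -, h2, h3⟩ := CB.glue_down (Finset.empty_subset _) h0
    exact ⟨T', h2, h3⟩
  have hGsub : CB.goodT P ⊆ Finset.range (P.length - 1) := Finset.filter_subset _ _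
  refine ⟨⟨fun Φ => ⟨CB.recoverT P Φ.1, ?_⟩, fun T => ⟨CB.glueF (CB.memB T.1) P, ?_, ?_⟩,
    ?_, ?_⟩, ?_⟩
  · obtain ⟨T', hT', heq⟩ := hrep Φ.1 Φ.2.2
    rw [hGood, heq, CB.recover_glue hne hpd (hT'.trans hGsub)]
    exact hT'
  · exact CB.glueF_isSetComposition hP _
  · have h1 : T.1 ⊆ CB.goodT P := by rw [← hGood]; exact T.2
    have := CB.glue_up hne ((T.1 \ ∅).card) ∅ T.1 rfl (Finset.empty_subset _) h1
    rwa [CB.memB_empty, CB.glueF_false] at this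
  · intro Φ
    apply Subtype.ext
    obtain ⟨T', hT', heq⟩ := hrep Φ.1 Φ.2.2
    show CB.glueF (CB.memB (CB.recoverT P Φ.1)) P = Φ.1
    rw [heq, CB.recover_glue hne hpd (hT'.trans hGsub)]
  · intro T
    apply Subtype.ext
    show CB.recoverT P (CB.glueF (CB.memB T.1) P) = T.1
    have h1 : T.1 ⊆ CB.goodT P := by rw [← hGood]; exact T.2
    exact CB.recover_glue hne hpd (h1.trans hGsub)
  · intro Φ Ψ
    obtain ⟨T₀, hT₀, h0⟩ := hrep Φ.1 Φ.2.2
    obtain ⟨T₁, hT₁, h1⟩ := hrep Ψ.1 Ψ.2.2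
    have e0 : CB.recoverT P Φ.1 = T₀ := by
      rw [h0, CB.recover_glue hne hpd (hT₀.trans hGsub)]
    have e1 : CB.recoverT P Ψ.1 = T₁ := by
      rw [h1, CB.recover_glue hne hpd (hT₁.trans hGsub)]
    show leStarC Φ.1 Ψ.1 ↔ CB.recoverT P Φ.1 ⊆ CB.recoverT P Ψ.1
    rw [e0, e1]
    constructor
    · intro h
      rw [h0] at h
      obtain ⟨T₂, hsub, hG2, h2⟩ := CB.glue_down hT₀ h
      have heq12 : CB.glueF (CB.memB T₁) P = CB.glueF (CB.memB T₂) P := h1.symm.trans h2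
      have r1 := CB.recover_glue hne hpd (hT₁.trans hGsub)
      have r2 := CB.recover_glue hne hpd (hG2.trans hGsub)
      have : T₂ = T₁ := by rw [← r2, ← r1, heq12]
      rw [← this]
      exact hsub
    · intro h
      rw [h0, h1]
      exact CB.glue_up hne _ T₀ T₁ rfl h hT₁


end
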